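/- Let f_W(x) = W^4 ρ(W^3 ρ(W^2 ρ(W^1 x))) be a 4-layer neural network and let f_Ŵ(x̂) = W^4 ρ(W^3 ρ(Ŵ^2 ρ(W^1 x̂))) be the network with the second weight matrix replaced by Ŵ^2 ∈ B_{W^2}(ε_2) and the input by x̂ ∈ B_x(ε_x). Then for any two output classes c_1, c_2: f^{c_1 c_2}_{Ŵ}(x̂) − f^{c_1 c_2}_W(x) ≤ η ‖W^3‖_∞ ‖W^4_{c_1,:} − W^4_{c_2,:}‖_1, where η = ε_2 ‖z^1‖_1 + ε_x ‖Ŵ^2‖_∞ ‖W^1‖_∞ and z^1 = ρ(W^1 x). -/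
import Mathlib


/-- Vector ℓ1 norm: `‖v‖₁ = Σ_q |v_q|`. -/
noncomputable def vecL1 {n : ℕ} (v : Fin n → ℝ) : ℝ := ∑ q, |v q|

/-- Vector ℓ∞ norm: `‖v‖_∞ = max_q |v_q|`. -/
noncomputable def vecLinf {n : ℕ} (v : Fin n → ℝ) : ℝ := ⨆ q, |v q|

/-- Matrix ℓ∞→ℓ∞ operator norm: `‖W‖_∞ = max_p Σ_q |W_{p,q}|`. -/
noncomputable def matLinf {m n : ℕ} (W : Matrix (Fin m) (Fin n) ℝ) : ℝ := ⨆ p, ∑ q, |W p q|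

/-- Matrix ℓ1→ℓ1 operator norm: `‖W‖₁ = max_q Σ_p |W_{p,q}|`. -/
noncomputable def matL1 {m n : ℕ} (W : Matrix (Fin m) (Fin n) ℝ) : ℝ := ⨆ q, ∑ p, |W p q|

/-- The 4-layer feed-forward network `f_W(x) = W^4 ρ(W^3 ρ(W^2 ρ(W^1 x)))`. -/
noncomputable def net4 {n0 n1 n2 n3 n4 : ℕ}
    (W1 : Matrix (Fin n1) (Fin n0) ℝ) (W2 : Matrix (Fin n2) (Fin n1) ℝ)
    (W3 : Matrix (Fin n3) (Fin n2) ℝ) (W4 : Matrix (Fin n4) (Fin n3) ℝ)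
    (ρ : ℝ → ℝ) (x : Fin n0 → ℝ) : Fin n4 → ℝ :=
  W4.mulVec (fun p =>
    ρ (W3.mulVec (fun q =>
      ρ (W2.mulVec (fun r => ρ (W1.mulVec x r)) q)) p))

lemma rowsum_le_matLinf' {m n : ℕ} (W : Matrix (Fin m) (Fin n) ℝ) (p : Fin m) :
    ∑ q, |W p q| ≤ matLinf W :=
  le_ciSup (Set.Finite.bddAbove (Set.finite_range fun p => ∑ q, |W p q|)) p

lemma matLinf_nonneg' {m n : ℕ} (W : Matrix (Fin m) (Fin n) ℝ) :
    0 ≤ matLinf W :=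
  Real.iSup_nonneg fun _ => Finset.sum_nonneg fun _ _ => abs_nonneg _

lemma mulVec_diff_le' {m n : ℕ} (W : Matrix (Fin m) (Fin n) ℝ) (u v : Fin n → ℝ)
    (c : ℝ) (hc : 0 ≤ c) (h : ∀ q, |u q - v q| ≤ c) (p : Fin m) :
    |W.mulVec u p - W.mulVec v p| ≤ c * matLinf W := by
  have h1 : |W.mulVec u p - W.mulVec v p| ≤ ∑ q, |W p q| * c := by
    rw [Matrix.mulVec, Matrix.mulVec, dotProduct, dotProduct,
      ← Finset.sum_sub_distrib]
    refine (Finset.abs_sum_le_sum_abs _ _).trans (Finset.sum_le_sum fun q _ => ?_)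
    rw [← mul_sub, abs_mul]
    exact mul_le_mul_of_nonneg_left (h q) (abs_nonneg _)
  calc |W.mulVec u p - W.mulVec v p| ≤ ∑ q, |W p q| * c := h1
    _ = (∑ q, |W p q|) * c := (Finset.sum_mul _ _ _).symm
    _ ≤ matLinf W * c := mul_le_mul_of_nonneg_right (rowsum_le_matLinf' W p) hc
    _ = c * matLinf W := mul_comm _ _

/-- for a 4-layer network with the second weight matrix perturbed
(`Ŵ^2 ∈ B_{W^2}(ε_2)`) and the input perturbed (`x̂ ∈ B_x(ε_x)`), for any output
classes `c₁, c₂`: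
`f^{c₁c₂}_{Ŵ}(x̂) − f^{c₁c₂}_W(x) ≤ η ‖W^3‖_∞ ‖W^4_{c₁,:} − W^4_{c₂,:}‖_1`,
where `η = ε_2 ‖z^1‖_1 + ε_x ‖Ŵ^2‖_∞ ‖W^1‖_∞` and `z^1 = ρ(W^1 x)`. -/
theorem statement8 {n0 n1 n2 n3 n4 : ℕ}
    (W1 : Matrix (Fin n1) (Fin n0) ℝ) (W2 What2 : Matrix (Fin n2) (Fin n1) ℝ)
    (W3 : Matrix (Fin n3) (Fin n2) ℝ) (W4 : Matrix (Fin n4) (Fin n3) ℝ)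
    (ρ : ℝ → ℝ) (hρ_nonneg : ∀ t, 0 ≤ ρ t) (hρ_mono : Monotone ρ)
    (hρ_lip : ∀ s t, |ρ s - ρ t| ≤ |s - t|)
    (ε2 εx : ℝ) (hε2 : 0 ≤ ε2) (hεx : 0 ≤ εx)
    (h2 : ∀ p q, |What2 p q - W2 p q| ≤ ε2)
    (x xhat : Fin n0 → ℝ) (hx : ∀ q, |xhat q - x q| ≤ εx)
    (c1 c2 : Fin n4) :
    (net4 W1 What2 W3 W4 ρ xhat c1 - net4 W1 What2 W3 W4 ρ xhat c2) -
        (net4 W1 W2 W3 W4 ρ x c1 - net4 W1 W2 W3 W4 ρ x c2) ≤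
      (ε2 * vecL1 (fun r => ρ (W1.mulVec x r)) + εx * matLinf What2 * matLinf W1) *
        matLinf W3 * vecL1 (fun t => W4 c1 t - W4 c2 t) := by
  set z1 : Fin n1 → ℝ := fun r => ρ (W1.mulVec x r) with hz1
  set zh1 : Fin n1 → ℝ := fun r => ρ (W1.mulVec xhat r) with hzh1
  set η : ℝ := ε2 * vecL1 z1 + εx * matLinf What2 * matLinf W1 with hη
  -- layer 1
  have s1 : ∀ r, |zh1 r - z1 r| ≤ εx * matLinf W1 := fun r =>
    (hρ_lip _ _).trans (mulVec_diff_le' W1 xhat x εx hεx hx r)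
  have hδ1 : 0 ≤ εx * matLinf W1 := mul_nonneg hεx (matLinf_nonneg' W1)
  -- layer 2
  set z2 : Fin n2 → ℝ := fun q => ρ (W2.mulVec z1 q) with hz2
  set zh2 : Fin n2 → ℝ := fun q => ρ (What2.mulVec zh1 q) with hzh2
  have s2 : ∀ q, |zh2 q - z2 q| ≤ η := by
    intro q
    refine (hρ_lip _ _).trans ?_
    have tri : |What2.mulVec zh1 q - W2.mulVec z1 q| ≤
        |What2.mulVec zh1 q - What2.mulVec z1 q| + |What2.mulVec z1 q - W2.mulVec z1 q| := by
      calc |What2.mulVec zh1 q - W2.mulVec z1 q|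
          = |(What2.mulVec zh1 q - What2.mulVec z1 q) +
              (What2.mulVec z1 q - W2.mulVec z1 q)| := by ring_nf
        _ ≤ _ := abs_add_le _ _
    have hA : |What2.mulVec zh1 q - What2.mulVec z1 q| ≤
        (εx * matLinf W1) * matLinf What2 :=
      mulVec_diff_le' What2 zh1 z1 _ hδ1 s1 q
    have hB : |What2.mulVec z1 q - W2.mulVec z1 q| ≤ ε2 * vecL1 z1 := by
      rw [Matrix.mulVec, Matrix.mulVec, dotProduct, dotProduct,
        ← Finset.sum_sub_distrib]
      calc |∑ r, (What2 q r * z1 r - W2 q r * z1 r)|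
          ≤ ∑ r, |What2 q r * z1 r - W2 q r * z1 r| := Finset.abs_sum_le_sum_abs _ _
        _ ≤ ∑ r, ε2 * |z1 r| := by
            refine Finset.sum_le_sum fun r _ => ?_
            rw [← sub_mul, abs_mul]
            exact mul_le_mul_of_nonneg_right (h2 q r) (abs_nonneg _)
        _ = ε2 * vecL1 z1 := by rw [vecL1, Finset.mul_sum]
    calc |What2.mulVec zh1 q - W2.mulVec z1 q| ≤ _ + _ := tri
      _ ≤ (εx * matLinf W1) * matLinf What2 + ε2 * vecL1 z1 := add_le_add hA hB
      _ = η := by rw [hη]; ring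
  have hηnn : 0 ≤ η := by
    rw [hη]
    exact add_nonneg (mul_nonneg hε2 (Finset.sum_nonneg fun _ _ => abs_nonneg _))
      (mul_nonneg (mul_nonneg hεx (matLinf_nonneg' What2)) (matLinf_nonneg' W1))
  -- layer 3
  set z3 : Fin n3 → ℝ := fun p => ρ (W3.mulVec z2 p) with hz3
  set zh3 : Fin n3 → ℝ := fun p => ρ (W3.mulVec zh2 p) with hzh3
  have s3 : ∀ p, |zh3 p - z3 p| ≤ η * matLinf W3 := fun p =>
    (hρ_lip _ _).trans (mulVec_diff_le' W3 zh2 z2 η hηnn s2 p)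
  -- output layer
  have hlhs : (net4 W1 What2 W3 W4 ρ xhat c1 - net4 W1 What2 W3 W4 ρ xhat c2) -
      (net4 W1 W2 W3 W4 ρ x c1 - net4 W1 W2 W3 W4 ρ x c2)
      = ∑ t, (W4 c1 t - W4 c2 t) * (zh3 t - z3 t) := by
    simp only [net4, Matrix.mulVec, dotProduct, hzh3, hz3, hzh2, hz2, hzh1, hz1,
      ← Finset.sum_sub_distrib]
    congr 1; funext t; ring
  rw [hlhs]
  calc ∑ t, (W4 c1 t - W4 c2 t) * (zh3 t - z3 t)
      ≤ ∑ t, |W4 c1 t - W4 c2 t| * (η * matLinf W3) := by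
        refine Finset.sum_le_sum fun t _ => ?_
        calc (W4 c1 t - W4 c2 t) * (zh3 t - z3 t)
            ≤ |(W4 c1 t - W4 c2 t) * (zh3 t - z3 t)| := le_abs_self _
          _ = |W4 c1 t - W4 c2 t| * |zh3 t - z3 t| := abs_mul _ _
          _ ≤ |W4 c1 t - W4 c2 t| * (η * matLinf W3) :=
              mul_le_mul_of_nonneg_left (s3 t) (abs_nonneg _)
    _ = η * matLinf W3 * vecL1 (fun t => W4 c1 t - W4 c2 t) := by
        rw [vecL1, Finset.mul_sum]
        exact Finset.sum_congr rfl fun t _ => mul_comm _ _
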